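/- For every 1 ≤ i ≤ 2n-1, the difference det L_i − m_i lies in the ideal of R generated by the variables in V_1 ∪ V_2 ∪ ⋯ ∪ V_{i-1} (this ideal being the zero ideal when i = 1); that is, det L_i ≡ m_i modulo M_1 + ⋯ + M_{i-1}, where M_j is the monomial ideal generated by V_j. -/

import Mathlib

open MvPolynomial

/-- Index type for the variables `x_{rj}`, `y_{rj}` with `0 ≤ j < r < n` (0-indexed);
`false` tags an x-variable and `true` a y-variable. -/
def Vars (n : ℕ) : Type := {v : ℕ × ℕ // v.2 < v.1 ∧ v.1 < n} × Bool

instance (n : ℕ) : DecidableEq (Vars n) := by unfold Vars; infer_instance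

/-- The entry `x_{rj}` (`b = false`) or `y_{rj}` (`b = true`) (0-indexed), with the
conventions `x_{rr} = y_{rr} = 1` and `x_{rj} = y_{rj} = 0` for `r < j`. -/
noncomputable def ent (k : Type*) [Field k] (n r j : ℕ) (b : Bool) :
    MvPolynomial (Vars n) k :=
  if h : j < r ∧ r < n then X (⟨⟨(r, j), h.1, h.2⟩, b⟩ : Vars n)
  else if r = j then 1 else 0

/-- The entry of the `n × 2n` matrix `L` in row `r` and column `c` (0-indexed): the
columns alternate `x_{r0}, y_{r0}, x_{r1}, y_{r1}, …`. -/
noncomputable def Lent (k : Type*) [Field k] (n r c : ℕ) : MvPolynomial (Vars n) k :=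
  ent k n r (c / 2) (decide (c % 2 = 1))

/-- The size of the square matrix `L_i`, `1 ≤ i ≤ 2n-1`. -/
def sz (n i : ℕ) : ℕ := min i (2 * n - i)

/-- Row offset of `L_i` inside `L` (`n - i` for `i ≤ n` and `i - n` for `i ≥ n`). -/
def roff (n i : ℕ) : ℕ := (n - i) + (i - n)

/-- Column offset of `L_i` inside `L` (`0` for `i ≤ n` and `2(i-n)` for `i ≥ n`). -/
def coff (n i : ℕ) : ℕ := 2 * (i - n)

/-- The matrix `L_i`: for `1 ≤ i ≤ n` the `i × i` submatrix of `L` on the last `i`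
rows and the first `i` columns; for `n ≤ i ≤ 2n-1` the `(2n-i) × (2n-i)` submatrix
obtained from the first `i` columns of `L` by deleting the first `2(i-n)` columns
and the first `i - n` rows. -/
noncomputable def Lmat (k : Type*) [Field k] (n i : ℕ) :
    Matrix (Fin (sz n i)) (Fin (sz n i)) (MvPolynomial (Vars n) k) :=
  Matrix.of fun r c => Lent k n (roff n i + r.1) (coff n i + c.1)

/-- The determinant `det L_i`. -/
noncomputable def detL (k : Type*) [Field k] (n i : ℕ) : MvPolynomial (Vars n) k :=
  (Lmat k n i).det

/-- The set `V_i` of variables appearing on the main diagonal of `L_i`. -/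
def Vset (k : Type*) [Field k] (n i : ℕ) : Set (Vars n) :=
  {v | ∃ r : Fin (sz n i), Lmat k n i r r = X v}

/-- The monomial `m_i`, the product of the elements of `V_i` (the diagonal entries
of `L_i` are precisely the variables of `V_i` together with constant entries `1`,
so `m_i` is the product of the diagonal entries of `L_i`). -/
noncomputable def mdiag (k : Type*) [Field k] (n i : ℕ) : MvPolynomial (Vars n) k :=
  ∏ r : Fin (sz n i), Lmat k n i r r

/-- For every `1 ≤ i ≤ 2n-1`, `det L_i ≡ m_i` modulo the ideal `M_1 + ⋯ + M_{i-1}`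
generated by the variables in `V_1 ∪ ⋯ ∪ V_{i-1}` (the zero ideal when `i = 1`). -/
lemma ent_eq_X {k : Type*} [Field k] {n r j : ℕ} (b : Bool) (h : j < r ∧ r < n) :
    ent k n r j b = X (⟨⟨(r, j), h.1, h.2⟩, b⟩ : Vars n) := by
  rw [ent, dif_pos h]
  rfl

lemma X_vars_eq {k : Type*} [Field k] {n a1 b1 a2 b2 : ℕ} (h1 : b1 < a1 ∧ a1 < n)
    (h2 : b2 < a2 ∧ a2 < n) {c1 c2 : Bool} (ea : a1 = a2) (eb : b1 = b2) (ec : c1 = c2) :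
    (X (⟨⟨(a1, b1), h1.1, h1.2⟩, c1⟩ : Vars n) : MvPolynomial (Vars n) k)
      = X (⟨⟨(a2, b2), h2.1, h2.2⟩, c2⟩ : Vars n) := by
  subst ea; subst eb; subst ec; rfl

lemma below_diag_mem {k : Type*} [Field k] {n i : ℕ} (hn : 2 ≤ n) (hi1 : 1 ≤ i)
    (hi2 : i ≤ 2 * n - 1) (r c : Fin (sz n i)) (hlt : c.1 < r.1) :
    ∃ v ∈ ⋃ j ∈ Set.Ico 1 i, Vset k n j, Lmat k n i r c = X v := by
  have hr : r.1 < i ∧ r.1 < 2 * n - i := by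
    have := r.2; simp only [sz, lt_min_iff] at this; exact this
  have hc : c.1 < i ∧ c.1 < 2 * n - i := by
    have := c.2; simp only [sz, lt_min_iff] at this; exact this
  have h1 : (coff n i + c.1) / 2 < roff n i + r.1 ∧ roff n i + r.1 < n := by
    simp only [roff, coff]; omega
  set j : ℕ := i - r.1 + c.1 with hjdef
  have hjIco : j ∈ Set.Ico 1 i := by constructor <;> omega
  have hs : (roff n i + r.1) - roff n j < sz n j := by
    simp only [roff, sz]; omega
  have h2 : (coff n j + ((roff n i + r.1) - roff n j)) / 2
        < roff n j + ((roff n i + r.1) - roff n j)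
      ∧ roff n j + ((roff n i + r.1) - roff n j) < n := by
    simp only [roff, coff]; omega
  refine ⟨⟨⟨(roff n i + r.1, (coff n i + c.1) / 2), h1.1, h1.2⟩,
      decide ((coff n i + c.1) % 2 = 1)⟩, ?_, ?_⟩
  · refine Set.mem_iUnion₂.2 ⟨j, hjIco, ⟨⟨(roff n i + r.1) - roff n j, hs⟩, ?_⟩⟩
    show Lent k n _ _ = _
    rw [Lent, ent_eq_X _ h2]
    refine X_vars_eq h2 ⟨h1.1, h1.2⟩ ?_ ?_ ?_
    · simp only [roff, coff] at *; omega
    · simp only [roff, coff] at *; omega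
    · have : (coff n j + ((roff n i + r.1) - roff n j)) % 2 = (coff n i + c.1) % 2 := by
        simp only [roff, coff] at *; omega
      rw [this]
  · show Lent k n _ _ = _
    rw [Lent, ent_eq_X _ h1]
    rfl

theorem detL_congr_mdiag {k : Type*} [Field k] (n : ℕ) (hn : 2 ≤ n)
    (i : ℕ) (hi1 : 1 ≤ i) (hi2 : i ≤ 2 * n - 1) :
    detL k n i - mdiag k n i ∈
      Ideal.span ((fun v : Vars n => (X v : MvPolynomial (Vars n) k)) ''
        (⋃ j ∈ Set.Ico 1 i, Vset k n j)) := by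
  classical
  set I : Ideal (MvPolynomial (Vars n) k) :=
    Ideal.span ((fun v : Vars n => (X v : MvPolynomial (Vars n) k)) ''
      (⋃ j ∈ Set.Ico 1 i, Vset k n j)) with hI
  have hdet : detL k n i = (∑ σ ∈ Finset.univ.erase (1 : Equiv.Perm (Fin (sz n i))),
      Equiv.Perm.sign σ • ∏ x, Lmat k n i (σ x) x) + mdiag k n i := by
    rw [detL, Matrix.det_apply, mdiag,
      ← Finset.sum_erase_add _ _ (Finset.mem_univ (1 : Equiv.Perm (Fin (sz n i))))]
    simp
  rw [hdet, add_sub_cancel_right]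
  refine Submodule.sum_mem _ fun σ hσ => ?_
  have hσ1 : σ ≠ 1 := (Finset.mem_erase.mp hσ).1
  rw [Units.smul_def, zsmul_eq_mul]
  refine Ideal.mul_mem_left _ _ ?_
  obtain ⟨x0, hx0⟩ : ∃ x : Fin (sz n i), x.1 < (σ x).1 := by
    by_contra hcon
    push_neg at hcon
    obtain ⟨y, hy⟩ : ∃ y, σ y ≠ y := by
      by_contra hall; push_neg at hall; exact hσ1 (Equiv.ext hall)
    have hsum : ∑ x : Fin (sz n i), ((σ x).1) = ∑ x : Fin (sz n i), x.1 :=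
      Equiv.sum_comp σ (fun x => x.1)
    have hlt : ∑ x : Fin (sz n i), ((σ x).1) < ∑ x : Fin (sz n i), x.1 :=
      Finset.sum_lt_sum (fun x _ => hcon x)
        ⟨y, Finset.mem_univ y, (hcon y).lt_of_ne (fun h => hy (Fin.ext h))⟩
    omega
  obtain ⟨v, hv, hveq⟩ := below_diag_mem (k := k) hn hi1 hi2 (σ x0) x0 hx0
  rw [← Finset.mul_prod_erase _ _ (Finset.mem_univ x0)]
  exact I.mul_mem_right _ (by rw [hveq]; exact Ideal.subset_span ⟨v, hv, rfl⟩)
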